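/- For any continuous strictly increasing bijections φ_i : ℝ≥0 → ℝ≥0, the virtual-welfare-maximizing mechanism for value maximizers—running the iterated-max welfare mechanism on virtual values φ_i(v_i(o)) and charging p_i = φ_i^{-1}(π_i) where π_i is the virtual externality price—is truthful for simple value maximizers on the set of value profiles where no ties among virtual values occur. In particular, in unrestricted domains, social choice functions other than affine maximizers of the values are truthfully implementable for value maximizers. -/

import Mathlib

open scoped NNReal
open Finset

variable {O : Type*} [Fintype O] [DecidableEq O] {n : ℕ}

/-- The values of bidders in `s` for outcome `o`, sorted in descending order. -/
noncomputable def sortedValsOn (s : Finset (Fin n)) (b : Fin n → O → ℝ≥0) (o : O) :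
    List ℝ≥0 :=
  ((s.val.map (fun i => b i o)).sort (· ≤ ·)).reverse

/-- `ostar` is an outcome of the iterated-max welfare mechanism on bidders `s`:
its descending sorted value vector is lexicographically maximal. -/
def IsIterMaxOn (s : Finset (Fin n)) (b : Fin n → O → ℝ≥0) (ostar : O) : Prop :=
  ∀ o : O, sortedValsOn s b o = sortedValsOn s b ostar ∨
    List.Lex (· < ·) (sortedValsOn s b o) (sortedValsOn s b ostar)

/-- No ties across (bidder, outcome) pairs. -/
def DistinctVals (b : Fin n → O → ℝ≥0) : Prop :=
  ∀ (i j : Fin n) (o₁ o₂ : O), (i, o₁) ≠ (j, o₂) → b i o₁ ≠ b j o₂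

/-- Externality payment of bidder `i` for the iterated-max mechanism `g`. -/
noncomputable def extPay (g : Finset (Fin n) → (Fin n → O → ℝ≥0) → O)
    (b : Fin n → O → ℝ≥0) (i : Fin n) : ℝ≥0 :=
  ((univ.erase i).filter
      (fun j => b j (g (univ.erase i) b) ≠ b j (g univ b))).sup
    (fun j => b j (g (univ.erase i) b))

set_option linter.unusedSectionVars false
namespace VWaux

variable {s : Finset (Fin n)} {b b₁ b₂ : Fin n → O → ℝ≥0} {o o₁ o₂ : O} {x y : ℝ≥0}

lemma mem_sortedValsOn : x ∈ sortedValsOn s b o ↔ ∃ j ∈ s, b j o = x := by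
  simp [sortedValsOn, Multiset.mem_sort, List.mem_reverse, Multiset.mem_map]

lemma sortedValsOn_sorted : (sortedValsOn s b o).Pairwise (· ≥ ·) :=
  List.pairwise_reverse.2 (Multiset.pairwise_sort _ (· ≤ ·))

lemma coe_sortedValsOn : (↑(sortedValsOn s b o) : Multiset ℝ≥0) = s.val.map (fun j => b j o) := by
  rw [sortedValsOn, Multiset.coe_reverse, Multiset.sort_eq]

lemma sortedValsOn_congr (h : ∀ j ∈ s, b₁ j o = b₂ j o) :
    sortedValsOn s b₁ o = sortedValsOn s b₂ o := by
  unfold sortedValsOn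
  congr 1
  congr 1
  exact Multiset.map_congr rfl h

lemma eq_outcome (hb : DistinctVals b) (hs : s.Nonempty)
    (h : sortedValsOn s b o₁ = sortedValsOn s b o₂) : o₁ = o₂ := by
  by_contra hne
  obtain ⟨j, hj⟩ := hs
  have hm : (s.val.map fun k => b k o₁) = s.val.map fun k => b k o₂ := by
    rw [← coe_sortedValsOn, ← coe_sortedValsOn, h]
  have hmem : b j o₁ ∈ s.val.map (fun k => b k o₂) := by
    rw [← hm]; exact Multiset.mem_map_of_mem _ hj
  obtain ⟨k, _, hbk⟩ := Multiset.mem_map.1 hmem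
  exact hb k j o₂ o₁ (by simp [Prod.ext_iff]; intro _; exact fun h' => hne h'.symm) hbk

lemma exists_ge_of_lex {l₁ l₂ : List ℝ≥0} (h1 : l₁.Pairwise (· ≥ ·))
    (h : l₁ = l₂ ∨ List.Lex (· < ·) l₁ l₂) (hx : x ∈ l₁) : ∃ y ∈ l₂, x ≤ y := by
  rcases h with rfl | h
  · exact ⟨x, hx, le_rfl⟩
  cases h with
  | nil => cases hx
  | @cons a t₁ t₂ h' =>
    refine ⟨a, List.mem_cons_self, ?_⟩
    rcases List.mem_cons.1 hx with rfl | hx'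
    · exact le_rfl
    · exact List.rel_of_pairwise_cons h1 hx'
  | @rel a t₁ c t₂ hac =>
    refine ⟨c, List.mem_cons_self, le_of_lt ?_⟩
    rcases List.mem_cons.1 hx with rfl | hx'
    · exact hac
    · exact lt_of_le_of_lt (List.rel_of_pairwise_cons h1 hx') hac

lemma lex_of_forall_lt {l₁ l₂ : List ℝ≥0} (h : ∀ x ∈ l₁, x < y) (hy : y ∈ l₂)
    (h2 : l₂.Pairwise (· ≥ ·)) : List.Lex (· < ·) l₁ l₂ := by
  cases l₂ with
  | nil => cases hy
  | cons c t =>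
    have hyc : y ≤ c := by
      rcases List.mem_cons.1 hy with rfl | h'
      · exact le_rfl
      · exact List.rel_of_pairwise_cons h2 h'
    cases l₁ with
    | nil => exact List.Lex.nil
    | cons a t₁ => exact List.Lex.rel (lt_of_lt_of_le (h a (List.mem_cons_self)) hyc)

lemma sortedValsOn_univ_eq (b : Fin n → O → ℝ≥0) (i : Fin n) (o : O) :
    sortedValsOn univ b o =
      List.orderedInsert (· ≥ ·) (b i o) (sortedValsOn (univ.erase i) b o) := by
  refine List.Perm.eq_of_pairwise' sortedValsOn_sorted
    (List.Pairwise.orderedInsert _ _ sortedValsOn_sorted) ?_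
  refine List.Perm.trans ?_ (List.perm_orderedInsert _ _ _).symm
  rw [← Multiset.coe_eq_coe]
  have : (↑(b i o :: sortedValsOn (univ.erase i) b o) : Multiset ℝ≥0)
      = b i o ::ₘ ↑(sortedValsOn (univ.erase i) b o) := rfl
  rw [this, coe_sortedValsOn, coe_sortedValsOn, Finset.erase_val]
  conv_lhs => rw [← Multiset.cons_erase (Finset.mem_def.1 (Finset.mem_univ i)),
    Multiset.map_cons]

lemma key_insert_lex (hxy : x < y) :
    ∀ (l₁ l₂ : List ℝ≥0), l₁.Pairwise (· ≥ ·) → l₂.Pairwise (· ≥ ·) →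
      (l₁ = l₂ ∨ List.Lex (· < ·) l₁ l₂) → y ∉ l₁ →
      List.Lex (· < ·) (List.orderedInsert (· ≥ ·) x l₁) (List.orderedInsert (· ≥ ·) y l₂) := by
  intro l₁
  induction l₁ with
  | nil =>
    intro l₂ _ _ _ _
    cases l₂ with
    | nil => exact List.Lex.rel hxy
    | cons c t =>
      simp only [List.orderedInsert]
      split
      · exact List.Lex.rel hxy
      · next hyc => exact List.Lex.rel (hxy.trans (lt_of_not_ge hyc))
  | cons a t₁ ih =>
    intro l₂ h₁ h₂ h hy
    have hstep : (∃ t₂, l₂ = a :: t₂ ∧ (t₁ = t₂ ∨ List.Lex (· < ·) t₁ t₂)) ∨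
        (∃ c t₂, l₂ = c :: t₂ ∧ a < c) := by
      rcases h with rfl | h
      · exact Or.inl ⟨t₁, rfl, Or.inl rfl⟩
      · cases h with
        | @cons _ _ t₂ h' => exact Or.inl ⟨t₂, rfl, Or.inr h'⟩
        | @rel _ _ c t₂ hac => exact Or.inr ⟨c, t₂, rfl, hac⟩
    rcases hstep with ⟨t₂, rfl, ht⟩ | ⟨c, t₂, rfl, hac⟩
    · -- same head a
      have hya : y ≠ a := fun h' => hy (h' ▸ List.mem_cons_self)
      by_cases hxa : x ≥ a
      · have hya2 : y ≥ a := le_trans hxa hxy.le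
        simp only [List.orderedInsert, if_pos hxa, if_pos hya2]
        exact List.Lex.rel hxy
      · by_cases hyA : y ≥ a
        · simp only [List.orderedInsert, if_neg hxa, if_pos hyA]
          exact List.Lex.rel (lt_of_le_of_ne hyA (Ne.symm hya))
        · simp only [List.orderedInsert, if_neg hxa, if_neg hyA]
          exact List.Lex.cons (ih t₂ (List.pairwise_cons.1 h₁).2 (List.pairwise_cons.1 h₂).2 ht
            (fun h' => hy (List.mem_cons_of_mem _ h')))
    · -- a < c
      by_cases hxa : x ≥ a
      · by_cases hyc : y ≥ c
        · simp only [List.orderedInsert, if_pos hxa, if_pos hyc]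
          exact List.Lex.rel hxy
        · simp only [List.orderedInsert, if_pos hxa, if_neg hyc]
          exact List.Lex.rel (hxy.trans (lt_of_not_ge hyc))
      · by_cases hyc : y ≥ c
        · simp only [List.orderedInsert, if_neg hxa, if_pos hyc]
          exact List.Lex.rel (lt_of_lt_of_le hac hyc)
        · simp only [List.orderedInsert, if_neg hxa, if_neg hyc]
          exact List.Lex.rel hac

end VWaux

/-- for any continuous, strictly increasing bijections
`φ i : ℝ≥0 → ℝ≥0`, the virtual-welfare-maximizing mechanism — running the
iterated-max welfare mechanism on virtual values `φ i (b i o)` and charging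
`p_i = φ_i⁻¹(π_i)` where `π_i` is the virtual externality payment — is truthful
for simple value maximizers on profiles where no ties among virtual values
occur. -/
theorem virtual_welfare_truthful_for_value_maximizers [Nonempty O]
    (hO : 3 ≤ Fintype.card O)
    (φ : Fin n → ℝ≥0 → ℝ≥0)
    (hcont : ∀ i, Continuous (φ i))
    (hmono : ∀ i, StrictMono (φ i))
    (hbij : ∀ i, Function.Bijective (φ i))
    (g : Finset (Fin n) → (Fin n → O → ℝ≥0) → O)
    (hg : ∀ (s : Finset (Fin n)) (b : Fin n → O → ℝ≥0), IsIterMaxOn s b (g s b))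
    (i : Fin n) (v b : Fin n → O → ℝ≥0)
    (htruth_distinct :
      DistinctVals (fun j o => φ j (Function.update b i (v i) j o)))
    (hdev_distinct : DistinctVals (fun j o => φ j (b j o))) :
    ¬ ((v i (g univ (fun j o => φ j (b j o))) >
          v i (g univ (fun j o => φ j (Function.update b i (v i) j o))) ∧
        Function.invFun (φ i) (extPay g (fun j o => φ j (b j o)) i) ≤
          v i (g univ (fun j o => φ j (b j o)))) ∨
       (v i (g univ (fun j o => φ j (b j o))) =
          v i (g univ (fun j o => φ j (Function.update b i (v i) j o))) ∧
        Function.invFun (φ i) (extPay g (fun j o => φ j (b j o)) i) <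
          Function.invFun (φ i)
            (extPay g (fun j o => φ j (Function.update b i (v i) j o)) i))) := by
  classical
  set B : Fin n → O → ℝ≥0 := fun j o => φ j (Function.update b i (v i) j o) with hBdef
  set B' : Fin n → O → ℝ≥0 := fun j o => φ j (b j o) with hB'def
  intro hcontra
  -- basic facts
  have hBi : ∀ o, B i o = φ i (v i o) := by
    intro o; simp only [hBdef, Function.update_self]
  have hagree : ∀ j, j ≠ i → ∀ o, B j o = B' j o := by
    intro j hj o; simp only [hBdef, hB'def, Function.update_of_ne hj]
  have hSagree : ∀ o, sortedValsOn (univ.erase i) B o = sortedValsOn (univ.erase i) B' o := by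
    intro o
    exact VWaux.sortedValsOn_congr (fun j hj => hagree j (Finset.mem_erase.1 hj).1 o)
  have hvinj : ∀ o₁ o₂ : O, v i o₁ = v i o₂ → o₁ = o₂ := by
    intro o₁ o₂ h
    by_contra hne
    exact htruth_distinct i i o₁ o₂
      (fun hp => hne (congrArg Prod.snd hp)) (by rw [hBi, hBi, h])
  set ostar := g univ B with hostar
  set odev := g univ B' with hodev
  set orest := g (univ.erase i) B' with horest
  rcases hcontra with ⟨hval, hpay⟩ | ⟨hval, hpay⟩
  · -- Case A : strictly better outcome at affordable price
    have hne : odev ≠ ostar := by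
      intro h; rw [h] at hval; exact lt_irrefl _ hval
    have hpay' : extPay g B' i ≤ φ i (v i odev) := by
      have h1 := (hmono i).monotone hpay
      rwa [Function.rightInverse_invFun (hbij i).2 _] at h1
    have hxy : B i ostar < B i odev := by
      rw [hBi, hBi]; exact (hmono i) hval
    -- key : truthful sorted list at ostar is lex-below that at odev
    have hkey : List.Lex (· < ·) (sortedValsOn univ B ostar) (sortedValsOn univ B odev) := by
      by_cases ho : odev = orest
      · -- deviating outcome equals the no-i outcome; payment is 0, use insert monotonicity
        have hle : sortedValsOn (univ.erase i) B ostar = sortedValsOn (univ.erase i) B odev ∨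
            List.Lex (· < ·) (sortedValsOn (univ.erase i) B ostar)
              (sortedValsOn (univ.erase i) B odev) := by
          have := hg (univ.erase i) B' ostar
          rw [← horest, ← ho] at this
          rwa [← hSagree, ← hSagree] at this
        have hynotin : B i odev ∉ sortedValsOn (univ.erase i) B ostar := by
          intro hmem
          obtain ⟨j, hj, hjeq⟩ := VWaux.mem_sortedValsOn.1 hmem
          exact htruth_distinct j i ostar odev
            (fun hp => (Finset.mem_erase.1 hj).1 (congrArg Prod.fst hp)) hjeq
        rw [VWaux.sortedValsOn_univ_eq B i ostar, VWaux.sortedValsOn_univ_eq B i odev]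
        exact VWaux.key_insert_lex hxy _ _ VWaux.sortedValsOn_sorted
          VWaux.sortedValsOn_sorted hle hynotin
      · -- deviating outcome differs from the no-i outcome; payment is the full sup
        have hfilter : ((univ.erase i).filter
            (fun j => B' j (g (univ.erase i) B') ≠ B' j (g univ B'))) = univ.erase i := by
          refine Finset.filter_true_of_mem (fun j hj => ?_)
          rw [← horest, ← hodev]
          exact hdev_distinct j j orest odev (fun hp => ho (congrArg Prod.snd hp).symm)
        have hforall : ∀ x ∈ sortedValsOn univ B ostar, x < B i odev := by
          intro x hx
          obtain ⟨j, _, hjeq⟩ := VWaux.mem_sortedValsOn.1 hx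
          by_cases hji : j = i
          · rw [← hjeq, hji]; exact hxy
          · have hxne : x ≠ B i odev := by
              intro h
              exact htruth_distinct j i ostar odev
                (fun hp => hji (congrArg Prod.fst hp)) (hjeq.trans h)
            have hxmem : x ∈ sortedValsOn (univ.erase i) B' ostar :=
              VWaux.mem_sortedValsOn.2 ⟨j, Finset.mem_erase.2 ⟨hji, Finset.mem_univ j⟩,
                by rw [← hagree j hji ostar, hjeq]⟩
            obtain ⟨z, hz, hxz⟩ := VWaux.exists_ge_of_lex VWaux.sortedValsOn_sorted
              (hg (univ.erase i) B' ostar) hxmem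
            obtain ⟨k, hk, hkz⟩ := VWaux.mem_sortedValsOn.1 hz
            have hzle : z ≤ extPay g B' i := by
              unfold extPay
              rw [hfilter, ← hkz]
              exact Finset.le_sup (f := fun j => B' j (g (univ.erase i) B')) hk
            have : x ≤ B i odev := by
              refine le_trans hxz (le_trans hzle ?_)
              rw [hBi]; exact hpay'
            exact lt_of_le_of_ne this hxne
        exact VWaux.lex_of_forall_lt hforall
          (VWaux.mem_sortedValsOn.2 ⟨i, Finset.mem_univ i, rfl⟩) VWaux.sortedValsOn_sorted
    rcases hg univ B odev with heq | hlex2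
    · exact hne (VWaux.eq_outcome htruth_distinct ⟨i, Finset.mem_univ i⟩ heq)
    · exact asymm hkey hlex2
  · -- Case B : same outcome value, strictly smaller payment
    have ho : odev = ostar := hvinj _ _ hval
    have hext : extPay g B' i = extPay g B i := by
      by_cases hs : univ.erase i = ∅
      · unfold extPay; rw [hs]; simp
      · obtain ⟨k0, hk0⟩ := Finset.nonempty_of_ne_empty hs
        have h12 : g (univ.erase i) B' = g (univ.erase i) B := by
          have ha := hg (univ.erase i) B (g (univ.erase i) B')
          have hb2 := hg (univ.erase i) B' (g (univ.erase i) B)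
          rw [hSagree, hSagree] at ha
          rcases ha with ha | ha
          · exact VWaux.eq_outcome hdev_distinct ⟨k0, hk0⟩ ha
          · rcases hb2 with hb2 | hb2
            · exact (VWaux.eq_outcome hdev_distinct ⟨k0, hk0⟩ hb2).symm
            · exact absurd hb2 (asymm ha)
        have hfeq : ((univ.erase i).filter
              (fun j => B' j (g (univ.erase i) B') ≠ B' j (g univ B'))) =
            ((univ.erase i).filter
              (fun j => B j (g (univ.erase i) B) ≠ B j (g univ B))) := by
          refine Finset.filter_congr (fun j hj => ?_)
          have hji := (Finset.mem_erase.1 hj).1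
          simp only [h12, ← hagree j hji, ← hodev, ← hostar, ho]
        unfold extPay
        rw [hfeq, h12]
        exact Finset.sup_congr rfl (fun j hj =>
          (hagree j (Finset.mem_erase.1 (Finset.mem_filter.1 hj).1).1 _).symm)
    rw [hext] at hpay
    exact lt_irrefl _ hpay
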